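/- arXiv:1704.04289 — 5 statements merged into one kernel-verified Lean document; each statement's English description precedes it below -/
import Mathlib

section
/- Let C be a D×D real symmetric positive-definite matrix and let N, S be positive reals. Consider the function g(H) = (N/(4S))·Tr(C·H) − (1/2)·log det H restricted to diagonal matrices H with strictly positive diagonal entries. Then g attains its minimum over this set at the unique diagonal matrix H* whose entries are H*_kk = 2S/(N·C_kk) for each k; that is, g(H*) ≤ g(H) for every diagonal H with positive entries, with equality only when H = H*. -/
lemma scalar_min (a x : ℝ) (ha : 0 < a) (hx : 0 < x) :
    a * (1 / (2 * a)) - 1 / 2 * Real.log (1 / (2 * a))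
      ≤ a * x - 1 / 2 * Real.log x ∧
    (a * (1 / (2 * a)) - 1 / 2 * Real.log (1 / (2 * a))
      = a * x - 1 / 2 * Real.log x → x = 1 / (2 * a)) := by
  have h2a : (0:ℝ) < 2 * a := by linarith
  have hinv : a * (1 / (2 * a)) = 1 / 2 := by field_simp
  have hloginv : Real.log (1 / (2 * a)) = -Real.log (2 * a) := by
    rw [one_div, Real.log_inv]
  have hmul : Real.log (2 * a * x) = Real.log (2 * a) + Real.log x :=
    Real.log_mul (ne_of_gt h2a) (ne_of_gt hx)
  constructor
  · have h1 : Real.log (2 * a * x) ≤ 2 * a * x - 1 :=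
      Real.log_le_sub_one_of_pos (by positivity)
    rw [hinv, hloginv]
    nlinarith [h1, hmul]
  · intro heq
    by_contra hne
    have ht : 2 * a * x ≠ 1 := by
      intro h
      apply hne
      field_simp
      linarith [h]
    have h1 : Real.log (2 * a * x) < 2 * a * x - 1 :=
      Real.log_lt_sub_one_of_pos (by positivity) ht
    rw [hinv, hloginv] at heq
    nlinarith [h1, hmul]

/-- Corollary 1: the optimal *diagonal* preconditioner for constant SGD minimizing
`g(H) = (N/(4S))·Tr(C·H) − (1/2)·log det H` over diagonal matrices with positive
entries is `H*_kk = 2S/(N·C_kk)`. -/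
theorem optimal_diagonal_preconditioner
    (D : ℕ) (C : Matrix (Fin D) (Fin D) ℝ) (hC : C.PosDef)
    (N S : ℝ) (hN : 0 < N) (hS : 0 < S)
    (g : Matrix (Fin D) (Fin D) ℝ → ℝ)
    (hg : ∀ d : Fin D → ℝ, (∀ k, 0 < d k) →
      g (Matrix.diagonal d) = N / (4 * S) * (C * Matrix.diagonal d).trace
        - (1 / 2) * Real.log (Matrix.diagonal d).det)
    (Hstar : Matrix (Fin D) (Fin D) ℝ)
    (hHstar : Hstar = Matrix.diagonal (fun k => 2 * S / (N * C k k))) :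
    ∀ d : Fin D → ℝ, (∀ k, 0 < d k) →
      g Hstar ≤ g (Matrix.diagonal d) ∧
      (g Hstar = g (Matrix.diagonal d) → Matrix.diagonal d = Hstar) := by
  -- diagonal entries of C are positive
  have hCkk : ∀ k, 0 < C k k := by
    intro k
    exact hC.diag_pos
  set a : Fin D → ℝ := fun k => N / (4 * S) * C k k with ha_def
  have ha : ∀ k, 0 < a k := fun k => by
    have := hCkk k; positivity
  set dstar : Fin D → ℝ := fun k => 2 * S / (N * C k k) with hdstar_def
  have hdstar_pos : ∀ k, 0 < dstar k := fun k => by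
    have := hCkk k; positivity
  have hdstar_eq : ∀ k, dstar k = 1 / (2 * a k) := by
    intro k
    have h1 := hCkk k
    simp only [hdstar_def, ha_def]
    field_simp
    ring
  -- formula for g on positive diagonal matrices as a sum
  have hform : ∀ d : Fin D → ℝ, (∀ k, 0 < d k) →
      g (Matrix.diagonal d) = ∑ k, (a k * d k - 1 / 2 * Real.log (d k)) := by
    intro d hd
    rw [hg d hd]
    have htr : (C * Matrix.diagonal d).trace = ∑ k, C k k * d k := by
      simp [Matrix.trace, Matrix.diag, Matrix.mul_diagonal]
    have hdet : Real.log (Matrix.diagonal d).det = ∑ k, Real.log (d k) := by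
      rw [Matrix.det_diagonal]
      exact Real.log_prod (fun k _ => (hd k).ne')
    rw [htr, hdet, Finset.mul_sum, Finset.mul_sum, ← Finset.sum_sub_distrib]
    congr 1
    funext k
    ring
  intro d hd
  have hgH : g Hstar = ∑ k, (a k * dstar k - 1 / 2 * Real.log (dstar k)) := by
    rw [hHstar]; exact hform dstar hdstar_pos
  have hgd := hform d hd
  have hterm : ∀ k ∈ Finset.univ,
      a k * dstar k - 1 / 2 * Real.log (dstar k)
        ≤ a k * d k - 1 / 2 * Real.log (d k) := by
    intro k _
    have := (scalar_min (a k) (d k) (ha k) (hd k)).1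
    rw [hdstar_eq k]
    exact this
  constructor
  · rw [hgH, hgd]
    exact Finset.sum_le_sum hterm
  · intro heq
    rw [hgH, hgd] at heq
    have hall := (Finset.sum_eq_sum_iff_of_le hterm).1 heq
    have hdk : ∀ k, d k = dstar k := by
      intro k
      have h := hall k (Finset.mem_univ k)
      rw [hdstar_eq k] at h
      have := (scalar_min (a k) (d k) (ha k) (hd k)).2 h
      rw [hdstar_eq k]
      exact this
    rw [hHstar]
    exact congrArg Matrix.diagonal (funext hdk)
end

section
/- Let A and C be D×D real symmetric positive-definite matrices, let N be a positive real, and set H = (2/N)·C⁻¹. Then the matrix Σ = (1/N)·A⁻¹ satisfies the stationarity equation H·A·Σ + Σ·A·H = H·C·H. -/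
/-- Exactness of SGFS: with `H = (2/N)·C⁻¹`, the posterior covariance
`Σ = (1/N)·A⁻¹` satisfies the stationarity equation `H·A·Σ + Σ·A·H = H·C·H`. -/
theorem sgfs_exact_posterior
    (D : ℕ) (A C : Matrix (Fin D) (Fin D) ℝ) (hA : A.PosDef) (hC : C.PosDef)
    (N : ℝ) (hN : 0 < N)
    (H : Matrix (Fin D) (Fin D) ℝ) (hH : H = (2 / N) • C⁻¹)
    (Sig : Matrix (Fin D) (Fin D) ℝ) (hSig : Sig = (1 / N) • A⁻¹) :
    H * A * Sig + Sig * A * H = H * C * H := by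
  have hAinv : IsUnit A.det := isUnit_iff_ne_zero.mpr hA.det_pos.ne'
  have hCinv : IsUnit C.det := isUnit_iff_ne_zero.mpr hC.det_pos.ne'
  subst hH hSig
  simp only [Matrix.smul_mul, Matrix.mul_smul, smul_smul]
  rw [Matrix.nonsing_inv_mul _ hAinv, Matrix.nonsing_inv_mul _ hCinv, one_mul,
    Matrix.mul_nonsing_inv_cancel_right _ _ hAinv, ← add_smul]
  congr 1
  field_simp
  ring
end

section
/- Let C be a D×D real symmetric positive-definite matrix and let N be a positive real. Consider g(H) = (N/4)·Tr(H·C) − (1/2)·log det H restricted to diagonal matrices H with strictly positive diagonal entries. Then g attains its minimum over this set at the unique diagonal matrix H* with entries H*_kk = (2/N)·(C_kk)⁻¹ for each k; that is, g(H*) ≤ g(H) for all such diagonal H, with equality only when H = H*. -/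
lemma sgfs_scalar_key (c x : ℝ) (hc : 0 < c) (hx : 0 < x) :
    c * (2 * c)⁻¹ - (1 / 2) * Real.log ((2 * c)⁻¹) ≤ c * x - (1 / 2) * Real.log x ∧
    (c * (2 * c)⁻¹ - (1 / 2) * Real.log ((2 * c)⁻¹) = c * x - (1 / 2) * Real.log x
      → x = (2 * c)⁻¹) := by
  have h2c : (0:ℝ) < 2 * c := by linarith
  have hmul : Real.log (x * (2 * c)) = Real.log x + Real.log (2 * c) :=
    Real.log_mul (ne_of_gt hx) (ne_of_gt h2c)
  have hinv : Real.log ((2 * c)⁻¹) = - Real.log (2 * c) := Real.log_inv _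
  have hcc : c * (2 * c)⁻¹ = 1 / 2 := by field_simp
  have hle : Real.log (x * (2 * c)) ≤ x * (2 * c) - 1 :=
    Real.log_le_sub_one_of_pos (by positivity)
  constructor
  · rw [hcc, hinv]
    nlinarith [hle, hmul]
  · intro heq
    by_contra hne
    have hne1 : x * (2 * c) ≠ 1 := by
      intro h1
      apply hne
      field_simp at h1 ⊢
      linarith
    have hlt : Real.log (x * (2 * c)) < x * (2 * c) - 1 :=
      Real.log_lt_sub_one_of_pos (by positivity) hne1
    rw [hcc, hinv] at heq
    nlinarith [hlt, hmul]

/-- Diagonal case of the Corollary to Theorem 3: the optimal diagonal SGFS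
preconditioner minimizing `g(H) = (N/4)·Tr(H·C) − (1/2)·log det H` over diagonal
matrices with positive entries has entries `H*_kk = (2/N)·(C_kk)⁻¹`. -/
theorem sgfs_optimal_diagonal_preconditioner
    (D : ℕ) (C : Matrix (Fin D) (Fin D) ℝ) (hC : C.PosDef)
    (N : ℝ) (hN : 0 < N)
    (g : Matrix (Fin D) (Fin D) ℝ → ℝ)
    (hg : ∀ d : Fin D → ℝ, (∀ k, 0 < d k) →
      g (Matrix.diagonal d) = N / 4 * (Matrix.diagonal d * C).trace
        - (1 / 2) * Real.log (Matrix.diagonal d).det)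
    (Hstar : Matrix (Fin D) (Fin D) ℝ)
    (hHstar : Hstar = Matrix.diagonal (fun k => (2 / N) * (C k k)⁻¹)) :
    ∀ d : Fin D → ℝ, (∀ k, 0 < d k) →
      g Hstar ≤ g (Matrix.diagonal d) ∧
      (g Hstar = g (Matrix.diagonal d) → Matrix.diagonal d = Hstar) := by
  intro d hd
  have hCkk : ∀ k, 0 < C k k := by
    intro k
    have h := hC.diag_pos (i := k)
    simpa using h
  -- the optimal entries
  set e : Fin D → ℝ := fun k => (2 / N) * (C k k)⁻¹ with he
  have hepos : ∀ k, 0 < e k := fun k => by have := hCkk k; positivity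
  have heeq : ∀ k, e k = (2 * (N / 4 * C k k))⁻¹ := by
    intro k
    have hc := hCkk k
    rw [he]
    field_simp
    ring
  -- rewrite g on diagonal matrices as a sum
  have hform : ∀ f : Fin D → ℝ, (∀ k, 0 < f k) →
      g (Matrix.diagonal f)
        = ∑ k, (N / 4 * C k k * f k - (1 / 2) * Real.log (f k)) := by
    intro f hf
    rw [hg f hf]
    have htr : (Matrix.diagonal f * C).trace = ∑ k, f k * C k k := by
      simp [Matrix.trace, Matrix.diag, Matrix.diagonal_mul]
    have hdet : Real.log (Matrix.diagonal f).det = ∑ k, Real.log (f k) := by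
      rw [Matrix.det_diagonal]
      exact Real.log_prod (fun k _ => (hf k).ne')
    rw [htr, hdet, Finset.mul_sum, Finset.mul_sum, ← Finset.sum_sub_distrib]
    congr 1; ext k; ring
  have hgd := hform d hd
  have hge := hform e hepos
  have hterm : ∀ k : Fin D,
      N / 4 * C k k * e k - (1 / 2) * Real.log (e k)
        ≤ N / 4 * C k k * d k - (1 / 2) * Real.log (d k) ∧
      (N / 4 * C k k * e k - (1 / 2) * Real.log (e k)
        = N / 4 * C k k * d k - (1 / 2) * Real.log (d k) → d k = e k) := by
    intro k
    have hc : 0 < N / 4 * C k k := by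
      have := hCkk k; positivity
    have := sgfs_scalar_key (N / 4 * C k k) (d k) hc (hd k)
    rw [← heeq k] at this
    exact ⟨by linarith [this.1], fun h => by
      have := this.2 (by linarith); rw [this, heeq k]⟩
  rw [hHstar]
  constructor
  · rw [hgd, hge]
    exact Finset.sum_le_sum fun k _ => (hterm k).1
  · intro heq
    rw [hgd, hge] at heq
    have hall := (Finset.sum_eq_sum_iff_of_le fun k _ => (hterm k).1).1 heq
    have : d = e := funext fun k => (hterm k).2 (hall k (Finset.mem_univ k))
    rw [this]
end

section
/- Let A be a D×D real symmetric positive-definite matrix, C a D×D real symmetric positive-semidefinite matrix, and let N, S be positive reals and ε ≥ 0. If Σ is a D×D real symmetric matrix satisfying (N/2)·(A·Σ + Σ·A) = I + (εN/(2S))·C, then the matrix Σ − (1/N)·A⁻¹ is positive semidefinite. In particular, when ε = 0 the unique symmetric solution is Σ = (1/N)·A⁻¹. -/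
open Matrix

lemma lyap_eigen_eq {D : ℕ} {A M Δ : Matrix (Fin D) (Fin D) ℝ}
    (hΔ : Δ.IsHermitian) (h : A * Δ + Δ * A = M) (i : Fin D) :
    (⇑(hΔ.eigenvectorBasis i)) ⬝ᵥ (M *ᵥ ⇑(hΔ.eigenvectorBasis i)) =
      2 * hΔ.eigenvalues i *
        ((⇑(hΔ.eigenvectorBasis i)) ⬝ᵥ (A *ᵥ ⇑(hΔ.eigenvectorBasis i))) := by
  set v := ⇑(hΔ.eigenvectorBasis i) with hv
  have hT : Δᵀ = Δ := by
    have := hΔ.eq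
    rwa [conjTranspose_eq_transpose_of_trivial] at this
  have heig : Δ *ᵥ v = hΔ.eigenvalues i • v := hΔ.mulVec_eigenvectorBasis i
  have h1 : (A * Δ) *ᵥ v = hΔ.eigenvalues i • (A *ᵥ v) := by
    rw [← mulVec_mulVec, heig, mulVec_smul]
  have h2 : v ⬝ᵥ ((Δ * A) *ᵥ v) = hΔ.eigenvalues i * (v ⬝ᵥ (A *ᵥ v)) := by
    rw [← mulVec_mulVec, dotProduct_mulVec v Δ, ← mulVec_transpose, hT, heig,
      smul_dotProduct, smul_eq_mul]
  calc v ⬝ᵥ (M *ᵥ v) = v ⬝ᵥ ((A * Δ) *ᵥ v) + v ⬝ᵥ ((Δ * A) *ᵥ v) := by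
        rw [← h, add_mulVec, dotProduct_add]
    _ = hΔ.eigenvalues i * (v ⬝ᵥ (A *ᵥ v)) + hΔ.eigenvalues i * (v ⬝ᵥ (A *ᵥ v)) := by
        rw [h1, dotProduct_smul, smul_eq_mul, h2]
    _ = 2 * hΔ.eigenvalues i * (v ⬝ᵥ (A *ᵥ v)) := by ring

/-- SGLD with constant rate (Section 5.1): if the stationary covariance `Σ`
satisfies `(N/2)·(A·Σ + Σ·A) = I + (εN/(2S))·C` with `A` positive definite and
`C` positive semidefinite, then `Σ − (1/N)·A⁻¹` is positive semidefinite;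
in particular when `ε = 0` the unique symmetric solution is `Σ = (1/N)·A⁻¹`. -/
theorem sgld_overestimates_posterior_covariance
    (D : ℕ) (A C Sig : Matrix (Fin D) (Fin D) ℝ)
    (hA : A.PosDef) (hC : C.PosSemidef) (hSig : Sig.IsHermitian)
    (N S ε : ℝ) (hN : 0 < N) (hS : 0 < S) (hε : 0 ≤ ε)
    (hstat : (N / 2) • (A * Sig + Sig * A) = 1 + (ε * N / (2 * S)) • C) :
    (Sig - (1 / N) • A⁻¹).PosSemidef ∧ (ε = 0 → Sig = (1 / N) • A⁻¹) := by
  have hdet : IsUnit A.det := isUnit_iff_ne_zero.mpr hA.det_pos.ne'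
  have hAinv : A * A⁻¹ = 1 := A.mul_nonsing_inv hdet
  have hinvA : A⁻¹ * A = 1 := A.nonsing_inv_mul hdet
  set Δ := Sig - (1 / N) • A⁻¹ with hΔdef
  have hAinvH : (A⁻¹).IsHermitian := hA.posSemidef.isHermitian.inv
  have hΔ : Δ.IsHermitian := hSig.sub
    (by rw [Matrix.IsHermitian, Matrix.conjTranspose_smul, star_trivial, hAinvH.eq])
  -- the Lyapunov equation for Δ
  have hlyap : A * Δ + Δ * A = (ε / S) • C := by
    have h2 : A * Sig + Sig * A = (2 / N) • (1 + (ε * N / (2 * S)) • C) := by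
      have := congrArg (fun X => (2 / N) • X) hstat
      simpa [smul_smul, div_mul_div_comm, mul_comm, hN.ne'] using this
    have : A * Δ + Δ * A
        = A * Sig + Sig * A - (1 / N) • (A * A⁻¹) - (1 / N) • (A⁻¹ * A) := by
      simp only [hΔdef, Matrix.mul_sub, Matrix.sub_mul, Matrix.mul_smul, Matrix.smul_mul]
      abel
    rw [this, hAinv, hinvA, h2, smul_add, smul_smul]
    have hc : 2 / N * (ε * N / (2 * S)) = ε / S := by
      field_simp
    have hc2 : (2 / N : ℝ) • (1 : Matrix (Fin D) (Fin D) ℝ) - (1 / N) • (1 : Matrix (Fin D) (Fin D) ℝ) - (1 / N) • (1 : Matrix (Fin D) (Fin D) ℝ) = 0 := by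
      rw [← sub_smul, ← sub_smul]
      have : (2 / N - 1 / N - 1 / N : ℝ) = 0 := by ring
      rw [this, zero_smul]
    rw [hc]
    calc (2 / N) • (1 : Matrix (Fin D) (Fin D) ℝ) + (ε / S) • C - (1 / N) • (1 : Matrix (Fin D) (Fin D) ℝ) - (1 / N) • (1 : Matrix (Fin D) (Fin D) ℝ)
        = ((2 / N) • (1 : Matrix (Fin D) (Fin D) ℝ) - (1 / N) • (1 : Matrix (Fin D) (Fin D) ℝ) - (1 / N) • (1 : Matrix (Fin D) (Fin D) ℝ)) + (ε / S) • C := by abel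
      _ = (ε / S) • C := by rw [hc2, zero_add]
  have hM : ((ε / S) • C).PosSemidef := by
    refine Matrix.PosSemidef.of_dotProduct_mulVec_nonneg ?_ ?_
    · rw [Matrix.IsHermitian, Matrix.conjTranspose_smul, star_trivial, hC.1.eq]
    · intro x
      have : star x ⬝ᵥ ((ε / S) • C) *ᵥ x = (ε / S) * (star x ⬝ᵥ C *ᵥ x) := by
        rw [Matrix.smul_mulVec, dotProduct_smul, smul_eq_mul]
      rw [this]
      exact mul_nonneg (div_nonneg hε hS.le) (hC.dotProduct_mulVec_nonneg x)
  -- eigenvalues of Δ are nonnegative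
  have heignn : ∀ i, 0 ≤ hΔ.eigenvalues i := by
    intro i
    have key := lyap_eigen_eq hΔ hlyap i
    set v := ⇑(hΔ.eigenvectorBasis i)
    have hv0 : v ≠ 0 := by
      have := hΔ.eigenvectorBasis.orthonormal.ne_zero i
      intro hc
      exact this (by ext j; exact congrFun hc j)
    have hAv : 0 < v ⬝ᵥ (A *ᵥ v) := by
      have := hA.dotProduct_mulVec_pos hv0
      simpa using this
    have hMv : 0 ≤ v ⬝ᵥ (((ε / S) • C) *ᵥ v) := by
      have := hM.dotProduct_mulVec_nonneg v
      simpa using this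
    nlinarith [key]
  refine ⟨hΔ.posSemidef_iff_eigenvalues_nonneg.mpr heignn, ?_⟩
  intro hε0
  -- with ε = 0, all eigenvalues are zero, hence Δ = 0
  have heigz : ∀ i, hΔ.eigenvalues i = 0 := by
    intro i
    have key := lyap_eigen_eq hΔ hlyap i
    set v := ⇑(hΔ.eigenvectorBasis i)
    have hv0 : v ≠ 0 := by
      have := hΔ.eigenvectorBasis.orthonormal.ne_zero i
      intro hc
      exact this (by ext j; exact congrFun hc j)
    have hAv : 0 < v ⬝ᵥ (A *ᵥ v) := by
      have := hA.dotProduct_mulVec_pos hv0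
      simpa using this
    have hMv : v ⬝ᵥ (((ε / S) • C) *ᵥ v) = 0 := by
      simp [hε0]
    rw [hMv] at key
    have : 2 * hΔ.eigenvalues i = 0 := by
      rcases mul_eq_zero.mp key.symm with h | h
      · exact h
      · exact absurd h hAv.ne'
    linarith
  have hΔ0 : Δ = 0 := by
    have := hΔ.spectral_theorem
    rw [this]
    have : Matrix.diagonal (RCLike.ofReal ∘ hΔ.eigenvalues) = (0 : Matrix (Fin D) (Fin D) ℝ) := by
      ext i j
      by_cases h : i = j <;> simp [Matrix.diagonal, h, heigz]
    rw [this, map_zero]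
  exact sub_eq_zero.mp hΔ0
end

section
/- Let A be a D×D real symmetric positive-definite matrix, Σ a D×D real matrix, and ε, T positive reals. Define the kernel K(t,s) = exp(−ε(t−s)A)·Σ for t ≥ s and K(t,s) = Σ·exp(−ε(s−t)A) for t < s, where exp is the matrix exponential. Then (1/T²)·∫₀ᵀ∫₀ᵀ K(t,s) ds dt = (1/(εT))·(A⁻¹·Σ + Σ·A⁻¹) + (1/(ε²T²))·( A⁻²·(exp(−εT·A) − I)·Σ + Σ·(exp(−εT·A) − I)·A⁻² ). -/
open MeasureTheory intervalIntegral

attribute [local instance] Matrix.frobeniusNormedAddCommGroup Matrix.frobeniusNormedSpace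
attribute [local instance] Matrix.frobeniusNormedRing Matrix.frobeniusNormedAlgebra

open NormedSpace in
lemma expGcont {n : ℕ} (B : Matrix (Fin n) (Fin n) ℝ) :
    Continuous fun u : ℝ => exp (u • B) :=
  exp_continuous.comp (continuous_id.smul continuous_const)

open NormedSpace in
lemma exp_smul_integral {n : ℕ} (B : Matrix (Fin n) (Fin n) ℝ) (hB : IsUnit B.det) (a b : ℝ) :
    ∫ u in a..b, exp (u • B) = B⁻¹ * exp (b • B) - B⁻¹ * exp (a • B) := by
  have hderiv : ∀ u ∈ Set.uIcc a b,
      HasDerivAt (fun u : ℝ => B⁻¹ * exp (u • B)) (exp (u • B)) u := by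
    intro u _
    have h := (hasDerivAt_exp_smul_const' (𝕂 := ℝ) B u).const_mul B⁻¹
    simp only [← mul_assoc, Matrix.nonsing_inv_mul B hB, one_mul] at h
    exact h
  rw [intervalIntegral.integral_eq_sub_of_hasDerivAt hderiv
    ((expGcont B).intervalIntegrable _ _)]

lemma intInt_mul_const {n : ℕ} (Sig : Matrix (Fin n) (Fin n) ℝ)
    (G : ℝ → Matrix (Fin n) (Fin n) ℝ) (hGcont : Continuous G) (a b : ℝ) :
    ∫ s in a..b, G s * Sig = (∫ s in a..b, G s) * Sig := by
  have := ((ContinuousLinearMap.mul ℝ (Matrix (Fin n) (Fin n) ℝ)).flip Sig).intervalIntegral_comp_comm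
    (hGcont.intervalIntegrable (μ := volume) a b)
  simpa using this

lemma intInt_const_mul {n : ℕ} (Sig : Matrix (Fin n) (Fin n) ℝ)
    (G : ℝ → Matrix (Fin n) (Fin n) ℝ) (hGcont : Continuous G) (a b : ℝ) :
    ∫ s in a..b, Sig * G s = Sig * (∫ s in a..b, G s) := by
  have := ((ContinuousLinearMap.mul ℝ (Matrix (Fin n) (Fin n) ℝ)) Sig).intervalIntegral_comp_comm
    (hGcont.intervalIntegrable (μ := volume) a b)
  simpa using this

lemma comm_inv_aux {n : ℕ} (M X : Matrix (Fin n) (Fin n) ℝ) (h : IsUnit M.det)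
    (hc : M * X = X * M) : M⁻¹ * X = X * M⁻¹ :=
  calc M⁻¹ * X = M⁻¹ * X * (M * M⁻¹) := by rw [Matrix.mul_nonsing_inv M h, mul_one]
    _ = M⁻¹ * (X * M) * M⁻¹ := by simp only [mul_assoc]
    _ = M⁻¹ * (M * X) * M⁻¹ := by rw [hc]
    _ = X * M⁻¹ := by rw [← mul_assoc, Matrix.nonsing_inv_mul M h, one_mul]


/-- Appendix G (Iterate Averaging): the double time-average of the stationary
autocorrelation kernel `K(t,s)` of the Ornstein–Uhlenbeck process equals
`(1/(εT))(A⁻¹Σ + ΣA⁻¹)` plus the exponential correction terms. -/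
theorem iterate_averaging_double_integral
    (D : ℕ) (A Sig : Matrix (Fin D) (Fin D) ℝ) (hA : A.PosDef)
    (ε T : ℝ) (hε : 0 < ε) (hT : 0 < T)
    (K : ℝ → ℝ → Matrix (Fin D) (Fin D) ℝ)
    (hK : ∀ t s : ℝ, K t s =
      if s ≤ t then NormedSpace.exp (-((ε * (t - s)) • A)) * Sig
      else Sig * NormedSpace.exp (-((ε * (s - t)) • A))) :
    (1 / T ^ 2) • (∫ t in (0 : ℝ)..T, ∫ s in (0 : ℝ)..T, K t s)
      = (1 / (ε * T)) • (A⁻¹ * Sig + Sig * A⁻¹)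
        + (1 / (ε ^ 2 * T ^ 2)) •
          (A⁻¹ ^ 2 * (NormedSpace.exp (-((ε * T) • A)) - 1) * Sig
            + Sig * (NormedSpace.exp (-((ε * T) • A)) - 1) * A⁻¹ ^ 2) := by
  have hAdet : IsUnit A.det := isUnit_iff_ne_zero.2 (ne_of_gt hA.det_pos)
  set B : Matrix (Fin D) (Fin D) ℝ := (-ε) • A with hBdef
  have hsc : ∀ u : ℝ, -((ε * u) • A) = u • B := by
    intro u
    rw [hBdef, smul_smul, mul_comm u (-ε), neg_mul, neg_smul]
  have hBdet : IsUnit B.det := by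
    rw [hBdef, Matrix.det_smul]
    exact (IsUnit.pow _ (isUnit_iff_ne_zero.2 (by linarith : (-ε : ℝ) ≠ 0))).mul hAdet
  set G : ℝ → Matrix (Fin D) (Fin D) ℝ := fun u => NormedSpace.exp (u • B) with hGdef
  have hGcont : Continuous G := expGcont B
  have hGint : ∀ a b : ℝ, ∫ u in a..b, G u = B⁻¹ * G b - B⁻¹ * G a :=
    exp_smul_integral B hBdet
  have hG0 : G 0 = 1 := by simp [hGdef]
  -- inner integral
  have hinner : Set.EqOn (fun t => ∫ s in (0:ℝ)..T, K t s)
      (fun t => (B⁻¹ * G t - B⁻¹) * Sig + Sig * (B⁻¹ * G (T - t) - B⁻¹))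
      (Set.uIcc 0 T) := by
    intro t ht
    rw [Set.uIcc_of_le hT.le] at ht
    have heq1 : Set.EqOn (K t) (fun s => G (t - s) * Sig) (Set.uIcc 0 t) := by
      intro s hs
      rw [Set.uIcc_of_le ht.1] at hs
      simp only [hK, if_pos hs.2, hsc, hGdef]
    have heq2 : Set.EqOn (K t) (fun s => Sig * G (s - t)) (Set.uIcc t T) := by
      intro s hs
      rw [Set.uIcc_of_le ht.2] at hs
      by_cases hst : s ≤ t
      · have : s = t := le_antisymm hst hs.1
        subst this
        simp [hK, hGdef]
      · simp only [hK, if_neg hst, hsc, hGdef]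
    have hc1 : Continuous fun s => G (t - s) * Sig :=
      (hGcont.comp (continuous_const.sub continuous_id)).mul continuous_const
    have hc2 : Continuous fun s => Sig * G (s - t) :=
      continuous_const.mul (hGcont.comp (continuous_id.sub continuous_const))
    have hint1 :=
      (hc1.continuousOn.congr heq1).intervalIntegrable (μ := volume)
    have hint2 :=
      (hc2.continuousOn.congr heq2).intervalIntegrable (μ := volume)
    have hsplit := intervalIntegral.integral_add_adjacent_intervals hint1 hint2
    simp only
    rw [← hsplit, intervalIntegral.integral_congr heq1, intervalIntegral.integral_congr heq2]
    have e1 : ∫ s in (0:ℝ)..t, G (t - s) * Sig = (∫ u in (0:ℝ)..t, G u) * Sig := by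
      rw [intInt_mul_const Sig (fun s => G (t - s))
          (hGcont.comp (continuous_const.sub continuous_id)),
        intervalIntegral.integral_comp_sub_left G t]
      simp
    have e2 : ∫ s in t..T, Sig * G (s - t) = Sig * ∫ u in (0:ℝ)..(T - t), G u := by
      rw [intInt_const_mul Sig (fun s => G (s - t))
          (hGcont.comp (continuous_id.sub continuous_const)),
        intervalIntegral.integral_comp_sub_right G t]
      simp
    rw [e1, e2, hGint, hGint, hG0, mul_one]
  have houter : (∫ t in (0:ℝ)..T, ∫ s in (0:ℝ)..T, K t s)
      = ∫ t in (0:ℝ)..T, ((B⁻¹ * G t - B⁻¹) * Sig + Sig * (B⁻¹ * G (T - t) - B⁻¹)) :=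
    intervalIntegral.integral_congr hinner
  -- compute the outer integral
  have hcont1 : Continuous fun t : ℝ => B⁻¹ * G t - B⁻¹ :=
    (continuous_const.mul hGcont).sub continuous_const
  have hcont2 : Continuous fun t : ℝ => B⁻¹ * G (T - t) - B⁻¹ :=
    (continuous_const.mul (hGcont.comp (continuous_const.sub continuous_id))).sub continuous_const
  have hsplitsum : (∫ t in (0:ℝ)..T, ((B⁻¹ * G t - B⁻¹) * Sig + Sig * (B⁻¹ * G (T - t) - B⁻¹)))
      = (∫ t in (0:ℝ)..T, (B⁻¹ * G t - B⁻¹) * Sig)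
        + ∫ t in (0:ℝ)..T, Sig * (B⁻¹ * G (T - t) - B⁻¹) := by
    exact intervalIntegral.integral_add
      ((hcont1.mul continuous_const).intervalIntegrable _ _)
      ((continuous_const.mul hcont2).intervalIntegrable _ _)
  have hmid : ∫ t in (0:ℝ)..T, (B⁻¹ * G t - B⁻¹) = B⁻¹ * (B⁻¹ * G T - B⁻¹) - T • B⁻¹ := by
    rw [intervalIntegral.integral_sub (f := fun t => B⁻¹ * G t)
      ((continuous_const.mul hGcont).intervalIntegrable _ _)
      (intervalIntegrable_const),
      intInt_const_mul _ _ hGcont, hGint, hG0, mul_one, intervalIntegral.integral_const,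
      sub_zero]
  have hmid2 : ∫ t in (0:ℝ)..T, (B⁻¹ * G (T - t) - B⁻¹) = B⁻¹ * (B⁻¹ * G T - B⁻¹) - T • B⁻¹ := by
    rw [intervalIntegral.integral_comp_sub_left (fun u => B⁻¹ * G u - B⁻¹) T]
    simp only [sub_self, sub_zero]
    exact hmid
  set Q : Matrix (Fin D) (Fin D) ℝ := B⁻¹ * (B⁻¹ * G T - B⁻¹) - T • B⁻¹ with hQdef
  have key : (∫ t in (0:ℝ)..T, ∫ s in (0:ℝ)..T, K t s) = Q * Sig + Sig * Q := by
    rw [houter, hsplitsum, intInt_mul_const Sig _ hcont1, intInt_const_mul Sig _ hcont2,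
      hmid, hmid2]
  -- commutation
  have hAX : A * G T = G T * A := by
    have h := (((Commute.refl A).smul_right (-ε)).smul_right T).exp_right
    simpa [hGdef, hBdef] using h.eq
  have hAinvX : A⁻¹ * G T = G T * A⁻¹ := comm_inv_aux A (G T) hAdet hAX
  have hsub : A⁻¹ * (G T - 1) = (G T - 1) * A⁻¹ := by
    rw [mul_sub, sub_mul, hAinvX, mul_one, one_mul]
  -- B⁻¹ in terms of A⁻¹
  have hBinv : B⁻¹ = (-ε⁻¹) • A⁻¹ := by
    have : Invertible (-ε) := invertibleOfNonzero (by linarith)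
    rw [hBdef, Matrix.inv_smul A (-ε) hAdet, invOf_eq_inv, inv_neg]
  have hQ : Q = (ε⁻¹ * ε⁻¹) • (A⁻¹ * (A⁻¹ * (G T - 1))) + (T * ε⁻¹) • A⁻¹ := by
    rw [hQdef, hBinv]
    simp only [Matrix.smul_mul, Matrix.mul_smul, smul_smul, mul_sub, mul_one, ← smul_sub]
    module
  have hGT : NormedSpace.exp (-((ε * T) • A)) = G T := by rw [hsc T]
  rw [key, hQ, hGT]
  have h2 : A⁻¹ * (A⁻¹ * (G T - 1)) = (G T - 1) * (A⁻¹ * A⁻¹) := by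
    rw [hsub, ← mul_assoc, hsub, mul_assoc]
  have hrear : Sig * (A⁻¹ * (A⁻¹ * (G T - 1))) = Sig * ((G T - 1) * (A⁻¹ * A⁻¹)) := by
    rw [h2]
  simp only [add_mul, mul_add, Matrix.smul_mul, Matrix.mul_smul, pow_two, mul_assoc, hrear]
  match_scalars <;> field_simp <;> ring
end
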